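/- Let n ≥ 1, let y₁,…,yₙ ∈ (0,1), and let λ ∈ (−1,0). Then for every θ > 0 the score function satisfies the two-sided bound n/θ + 2·Σ_{i=1}^n log yᵢ < ψ(θ) < n/θ + Σ_{i=1}^n log yᵢ. Consequently ψ(θ) > 0 whenever 0 < θ < n/(−2·Σ_{i=1}^n log yᵢ), and ψ(θ) < 0 whenever θ > n/(−Σ_{i=1}^n log yᵢ). -/
import Mathlib

open Real

/-- The profile score function for the shape parameter `θ` of the GTLD:
`ψ(θ) = n/θ + Σᵢ log yᵢ − 2λ Σᵢ yᵢ^θ log yᵢ/(1 + λ − 2λ yᵢ^θ)`. -/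
noncomputable def psi (n : ℕ) (y : Fin n → ℝ) (lam : ℝ) (θ : ℝ) : ℝ :=
  (n : ℝ) / θ + ∑ i, Real.log (y i) -
    2 * lam * ∑ i, (y i) ^ θ * Real.log (y i) / (1 + lam - 2 * lam * (y i) ^ θ)

lemma term_bounds (y lam θ : ℝ) (hy0 : 0 < y) (hy1 : y < 1)
    (hl1 : -1 < lam) (hl0 : lam < 0) (hθ : 0 < θ) :
    0 < 2 * lam * (y ^ θ * Real.log y / (1 + lam - 2 * lam * y ^ θ)) ∧
      2 * lam * (y ^ θ * Real.log y / (1 + lam - 2 * lam * y ^ θ)) < -Real.log y := by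
  have ht0 : 0 < y ^ θ := Real.rpow_pos_of_pos hy0 θ
  have ht1 : y ^ θ < 1 := Real.rpow_lt_one (le_of_lt hy0) hy1 hθ
  have hL : Real.log y < 0 := Real.log_neg hy0 hy1
  have hD : 0 < 1 + lam - 2 * lam * y ^ θ := by nlinarith
  constructor
  · rw [mul_div_assoc']
    exact div_pos (mul_pos_of_neg_of_neg (by linarith) (mul_neg_of_pos_of_neg ht0 hL)) hD
  · rw [mul_div_assoc', div_lt_iff₀ hD]
    nlinarith

theorem gtld_score_bounds (n : ℕ) (hn : 1 ≤ n) (y : Fin n → ℝ)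
    (hy : ∀ i, y i ∈ Set.Ioo (0 : ℝ) 1) (lam : ℝ)
    (hlam : lam ∈ Set.Ioo (-1 : ℝ) 0) :
    (∀ θ : ℝ, 0 < θ →
        (n : ℝ) / θ + 2 * ∑ i, Real.log (y i) < psi n y lam θ ∧
          psi n y lam θ < (n : ℝ) / θ + ∑ i, Real.log (y i)) ∧
      (∀ θ : ℝ, 0 < θ → θ < (n : ℝ) / (-2 * ∑ i, Real.log (y i)) →
        0 < psi n y lam θ) ∧
      (∀ θ : ℝ, (n : ℝ) / (-∑ i, Real.log (y i)) < θ →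
        psi n y lam θ < 0) := by
  obtain ⟨hl1, hl0⟩ := hlam
  have hne : (Finset.univ : Finset (Fin n)).Nonempty := by
    have : Nonempty (Fin n) := Fin.pos_iff_nonempty.mp (by omega)
    exact Finset.univ_nonempty
  have hS : ∑ i, Real.log (y i) < 0 := by
    apply Finset.sum_neg (fun i _ => Real.log_neg (hy i).1 (hy i).2) hne
  have key : ∀ θ : ℝ, 0 < θ →
      (n : ℝ) / θ + 2 * ∑ i, Real.log (y i) < psi n y lam θ ∧
        psi n y lam θ < (n : ℝ) / θ + ∑ i, Real.log (y i) := by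
    intro θ hθ
    have hcorr : ∀ i : Fin n, 0 <
        2 * lam * ((y i) ^ θ * Real.log (y i) / (1 + lam - 2 * lam * (y i) ^ θ)) ∧
        2 * lam * ((y i) ^ θ * Real.log (y i) / (1 + lam - 2 * lam * (y i) ^ θ)) < -Real.log (y i) :=
      fun i => term_bounds (y i) lam θ (hy i).1 (hy i).2 hl1 hl0 hθ
    have hsum1 : 0 <
        ∑ i, 2 * lam * ((y i) ^ θ * Real.log (y i) / (1 + lam - 2 * lam * (y i) ^ θ)) :=
      Finset.sum_pos (fun i _ => (hcorr i).1) hne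
    have hsum2 : ∑ i, 2 * lam * ((y i) ^ θ * Real.log (y i) / (1 + lam - 2 * lam * (y i) ^ θ)) <
        -∑ i, Real.log (y i) := by
      rw [← Finset.sum_neg_distrib]
      exact Finset.sum_lt_sum_of_nonempty hne (fun i _ => (hcorr i).2)
    have hps : psi n y lam θ = (n : ℝ) / θ + ∑ i, Real.log (y i) -
        ∑ i, 2 * lam * ((y i) ^ θ * Real.log (y i) / (1 + lam - 2 * lam * (y i) ^ θ)) := by
      rw [psi, Finset.mul_sum]
    rw [hps]
    constructor <;> linarith
  refine ⟨key, ?_, ?_⟩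
  · intro θ hθ hθ2
    have h2S : 0 < -2 * ∑ i, Real.log (y i) := by linarith
    have : θ * (-2 * ∑ i, Real.log (y i)) < n := (lt_div_iff₀ h2S).mp hθ2
    have hnθ : -2 * ∑ i, Real.log (y i) < (n : ℝ) / θ := by
      rw [lt_div_iff₀ hθ]; nlinarith
    have := (key θ hθ).1
    nlinarith
  · intro θ hθ2
    have hmS : 0 < -∑ i, Real.log (y i) := by linarith
    have hθ : 0 < θ := lt_trans (div_pos (by exact_mod_cast Nat.pos_of_ne_zero (by omega)) hmS) hθ2
    have : (n : ℝ) < θ * (-∑ i, Real.log (y i)) := by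
      have := (div_lt_iff₀ hmS).mp hθ2; nlinarith
    have hnθ : (n : ℝ) / θ < -∑ i, Real.log (y i) := by
      rw [div_lt_iff₀ hθ]; nlinarith
    have := (key θ hθ).2
    linarith
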